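/- The solution map Λ of the CMS equations is non-anticipative: if (κᵢ, xᵢ) = Λ(ηᵢ, x₀, ζᵢ) for i=1,2 and (η₁,ζ₁) = (η₂,ζ₂) on [0,T], then (κ₁,x₁) = (κ₂,x₂) on [0,T]. -/

import Mathlib

open MeasureTheory Set Filter Topology

/-- `(κ, x)` is a solution of the centered many-server (CMS) equations associated with
`(η, x₀, ζ)`, where `g` is the density of the service distribution. -/
def CMSsol (g η ζ : ℝ → ℝ) (x₀ : ℝ) (κ x : ℝ → ℝ) : Prop :=
  ContinuousOn κ (Ici 0) ∧ ContinuousOn x (Ici 0) ∧ κ 0 = 0 ∧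
    (∀ t, 0 ≤ t → min (x t) 0 = ζ t + κ t - ∫ s in (0:ℝ)..t, g (t - s) * κ s) ∧
    (∀ t, 0 ≤ t → κ t = η t - max (x t) 0 + max x₀ 0)

/-- Grönwall-type lemma: a nonnegative continuous function dominated by `M` times its own
primitive vanishes. -/
lemma gronwall_zero (f : ℝ → ℝ) (hf : Continuous f) (hf0 : ∀ s, 0 ≤ f s)
    (M T : ℝ) (hM : 0 ≤ M) (hT : 0 ≤ T)
    (hb : ∀ t ∈ Icc (0:ℝ) T, f t ≤ M * ∫ s in (0:ℝ)..t, f s) :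
    ∀ t ∈ Icc (0:ℝ) T, f t = 0 := by
  set F : ℝ → ℝ := fun u => ∫ s in (0:ℝ)..u, f s with hF
  have hF' : ∀ u : ℝ, HasDerivAt F (f u) u := fun u =>
    (hf.integral_hasStrictDerivAt 0 u).hasDerivAt
  have hFnonneg : ∀ u ∈ Icc (0:ℝ) T, 0 ≤ F u := fun u hu =>
    intervalIntegral.integral_nonneg hu.1 (fun s _ => hf0 s)
  have key : ∀ t ∈ Icc (0:ℝ) T, ‖F t‖ ≤ gronwallBound 0 M 0 (t - 0) := by
    apply norm_le_gronwallBound_of_norm_deriv_right_le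
    · exact fun u _ => (hF' u).continuousAt.continuousWithinAt
    · exact fun u _ => (hF' u).hasDerivWithinAt
    · simp [hF, intervalIntegral.integral_same]
    · intro u hu
      have hu' : u ∈ Icc (0:ℝ) T := ⟨hu.1, le_of_lt hu.2⟩
      have h1 := hb u hu'
      have h2 := hFnonneg u hu'
      rw [Real.norm_eq_abs, Real.norm_eq_abs, abs_of_nonneg (hf0 u), abs_of_nonneg h2]
      linarith
  intro t ht
  have h0 : |F t| ≤ 0 := by
    simpa [Real.norm_eq_abs, gronwallBound_ε0_δ0] using key t ht
  have hF0 : F t = 0 := abs_eq_zero.mp (le_antisymm h0 (abs_nonneg _))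
  have h1 : f t ≤ M * F t := hb t ht
  rw [hF0] at h1
  have := hf0 t
  linarith

/-- The CMS solution map is non-anticipative: if `(κᵢ,xᵢ)` solves the CMS equations
associated with `(ηᵢ, x₀, ζᵢ)` for `i = 1,2`, and `(η₁,ζ₁) = (η₂,ζ₂)` on `[0,T]`, then
`(κ₁,x₁) = (κ₂,x₂)` on `[0,T]`. -/
theorem cms_nonanticipative (g : ℝ → ℝ)
    (hg_cont : ContinuousOn g (Ici 0)) (hg_nonneg : ∀ x ∈ Ici (0:ℝ), 0 ≤ g x)
    (hg_prob : ∫ x in Ioi (0:ℝ), g x = 1)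
    (η₁ η₂ ζ₁ ζ₂ : ℝ → ℝ) (x₀ : ℝ)
    (hη₁ : ContinuousOn η₁ (Ici 0)) (hη₁0 : η₁ 0 = 0)
    (hη₂ : ContinuousOn η₂ (Ici 0)) (hη₂0 : η₂ 0 = 0)
    (hζ₁ : ContinuousOn ζ₁ (Ici 0)) (hζ₁0 : ζ₁ 0 = min x₀ 0)
    (hζ₂ : ContinuousOn ζ₂ (Ici 0)) (hζ₂0 : ζ₂ 0 = min x₀ 0)
    (κ₁ x₁ κ₂ x₂ : ℝ → ℝ)
    (h₁ : CMSsol g η₁ ζ₁ x₀ κ₁ x₁) (h₂ : CMSsol g η₂ ζ₂ x₀ κ₂ x₂)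
    (T : ℝ) (hT : 0 ≤ T)
    (hη : ∀ t ∈ Icc (0:ℝ) T, η₁ t = η₂ t) (hζ : ∀ t ∈ Icc (0:ℝ) T, ζ₁ t = ζ₂ t) :
    ∀ t ∈ Icc (0:ℝ) T, κ₁ t = κ₂ t ∧ x₁ t = x₂ t := by
  obtain ⟨hκ₁c, hx₁c, hκ₁0, heq₁, hkx₁⟩ := h₁
  obtain ⟨hκ₂c, hx₂c, hκ₂0, heq₂, hkx₂⟩ := h₂
  -- globally continuous versions of x₁, x₂
  have hmax : Continuous (fun s : ℝ => max s 0) := continuous_id.max continuous_const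
  have hmem : ∀ s : ℝ, max s 0 ∈ Ici (0:ℝ) := fun s => le_max_right s 0
  set X₁ : ℝ → ℝ := fun s => x₁ (max s 0) with hX₁def
  set X₂ : ℝ → ℝ := fun s => x₂ (max s 0) with hX₂def
  have hX₁ : Continuous X₁ := hx₁c.comp_continuous hmax hmem
  have hX₂ : Continuous X₂ := hx₂c.comp_continuous hmax hmem
  have hX₁eq : ∀ s : ℝ, 0 ≤ s → X₁ s = x₁ s := fun s hs => by
    simp [hX₁def, max_eq_left hs]
  have hX₂eq : ∀ s : ℝ, 0 ≤ s → X₂ s = x₂ s := fun s hs => by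
    simp [hX₂def, max_eq_left hs]
  set f : ℝ → ℝ := fun s => |X₁ s - X₂ s| with hfdef
  have hfc : Continuous f := (hX₁.sub hX₂).abs
  have hf0 : ∀ s, 0 ≤ f s := fun s => abs_nonneg _
  -- the bound M on g over [0, T]
  obtain ⟨c, hcmem, hc⟩ := isCompact_Icc.exists_isMaxOn (nonempty_Icc.mpr hT)
    (hg_cont.mono (Icc_subset_Ici_self))
  set M : ℝ := g c with hMdef
  have hM0 : 0 ≤ M := hg_nonneg c (Icc_subset_Ici_self hcmem)
  have hMb : ∀ y ∈ Icc (0:ℝ) T, g y ≤ M := fun y hy => hc hy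
  -- key identity
  have key : ∀ t ∈ Icc (0:ℝ) T,
      x₁ t - x₂ t = ∫ s in (0:ℝ)..t, g (t - s) * (max (x₁ s) 0 - max (x₂ s) 0) := by
    intro t ht
    have ht0 : (0:ℝ) ≤ t := ht.1
    have hsub : Icc (0:ℝ) t ⊆ Ici 0 := Icc_subset_Ici_self
    have hgts : ContinuousOn (fun s => g (t - s)) (Icc 0 t) := by
      apply hg_cont.comp (continuous_const.sub continuous_id).continuousOn
      intro s hs
      simp only [mem_Ici, id_eq, Pi.sub_apply]
      rcases hs with ⟨h1, h2⟩
      linarith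
    have hint : ∀ (κ : ℝ → ℝ), ContinuousOn κ (Ici 0) →
        IntervalIntegrable (fun s => g (t - s) * κ s) volume 0 t := by
      intro κ hκ
      apply ContinuousOn.intervalIntegrable
      rw [uIcc_of_le ht0]
      exact hgts.mul (hκ.mono hsub)
    have hsplit : (∫ s in (0:ℝ)..t, g (t - s) * κ₁ s) - ∫ s in (0:ℝ)..t, g (t - s) * κ₂ s
        = ∫ s in (0:ℝ)..t, g (t - s) * (κ₁ s - κ₂ s) := by
      rw [← intervalIntegral.integral_sub (hint κ₁ hκ₁c) (hint κ₂ hκ₂c)]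
      congr 1; ext s; ring
    have hκdiff : ∀ s ∈ Icc (0:ℝ) t, κ₁ s - κ₂ s = -(max (x₁ s) 0 - max (x₂ s) 0) := by
      intro s hs
      have hsT : s ∈ Icc (0:ℝ) T := ⟨hs.1, hs.2.trans ht.2⟩
      have e1 := hkx₁ s hs.1
      have e2 := hkx₂ s hs.1
      rw [hη s hsT] at e1
      linarith
    have hcongr : (∫ s in (0:ℝ)..t, g (t - s) * (κ₁ s - κ₂ s))
        = - ∫ s in (0:ℝ)..t, g (t - s) * (max (x₁ s) 0 - max (x₂ s) 0) := by
      rw [← intervalIntegral.integral_neg]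
      apply intervalIntegral.integral_congr
      intro s hs
      rw [uIcc_of_le ht0] at hs
      show g (t - s) * (κ₁ s - κ₂ s) = -(g (t - s) * (max (x₁ s) 0 - max (x₂ s) 0))
      rw [hκdiff s hs]; ring
    have e1 := heq₁ t ht0
    have e2 := heq₂ t ht0
    rw [hζ t ht] at e1
    have eκ1 := hkx₁ t ht0
    have eκ2 := hkx₂ t ht0
    rw [hη t ht] at eκ1
    have hx1 : min (x₁ t) 0 + max (x₁ t) 0 = x₁ t + 0 := min_add_max _ _
    have hx2 : min (x₂ t) 0 + max (x₂ t) 0 = x₂ t + 0 := min_add_max _ _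
    have hκd : κ₁ t - κ₂ t = -(max (x₁ t) 0 - max (x₂ t) 0) := by linarith
    linarith [hsplit, hcongr]
  -- the Grönwall bound
  have hbound : ∀ t ∈ Icc (0:ℝ) T, f t ≤ M * ∫ s in (0:ℝ)..t, f s := by
    intro t ht
    have ht0 : (0:ℝ) ≤ t := ht.1
    have hsub : Icc (0:ℝ) t ⊆ Ici 0 := Icc_subset_Ici_self
    have hgts : ContinuousOn (fun s => g (t - s)) (Icc 0 t) := by
      apply hg_cont.comp (continuous_const.sub continuous_id).continuousOn
      intro s hs
      simp only [mem_Ici, id_eq, Pi.sub_apply]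
      rcases hs with ⟨h1, h2⟩
      linarith
    have hhc : ContinuousOn (fun s => g (t - s) * (max (x₁ s) 0 - max (x₂ s) 0)) (Icc 0 t) := by
      apply hgts.mul
      exact ((hx₁c.mono hsub).sup continuousOn_const).sub
        ((hx₂c.mono hsub).sup continuousOn_const)
    have hintg : IntervalIntegrable
        (fun s => g (t - s) * (max (x₁ s) 0 - max (x₂ s) 0)) volume 0 t := by
      apply ContinuousOn.intervalIntegrable; rwa [uIcc_of_le ht0]
    have h1 : f t = |x₁ t - x₂ t| := by rw [hfdef]; simp [hX₁eq t ht0, hX₂eq t ht0]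
    rw [h1, key t ht]
    calc |∫ s in (0:ℝ)..t, g (t - s) * (max (x₁ s) 0 - max (x₂ s) 0)|
        ≤ ∫ s in (0:ℝ)..t, |g (t - s) * (max (x₁ s) 0 - max (x₂ s) 0)| :=
          intervalIntegral.abs_integral_le_integral_abs ht0
      _ ≤ ∫ s in (0:ℝ)..t, M * f s := by
          apply intervalIntegral.integral_mono_on ht0
          · apply ContinuousOn.intervalIntegrable
            rw [uIcc_of_le ht0]; exact hhc.abs
          · exact (continuous_const.mul hfc).intervalIntegrable _ _
          · intro s hs
            have hsT : t - s ∈ Icc (0:ℝ) T := by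
              constructor
              · linarith [hs.2]
              · linarith [hs.1, ht.2]
            have hg1 : 0 ≤ g (t - s) := hg_nonneg _ (Icc_subset_Ici_self hsT)
            have hg2 : g (t - s) ≤ M := hMb _ hsT
            have habs : |max (x₁ s) 0 - max (x₂ s) 0| ≤ f s := by
              have := abs_max_sub_max_le_abs (x₁ s) (x₂ s) 0
              rw [hfdef]
              simpa [hX₁eq s hs.1, hX₂eq s hs.1] using this
            rw [abs_mul, abs_of_nonneg hg1]
            calc g (t - s) * |max (x₁ s) 0 - max (x₂ s) 0|
                ≤ M * |max (x₁ s) 0 - max (x₂ s) 0| := by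
                  apply mul_le_mul_of_nonneg_right hg2 (abs_nonneg _)
              _ ≤ M * f s := mul_le_mul_of_nonneg_left habs hM0
      _ = M * ∫ s in (0:ℝ)..t, f s := intervalIntegral.integral_const_mul _ _
  have hzero := gronwall_zero f hfc hf0 M T hM0 hT hbound
  intro t ht
  have hx : x₁ t = x₂ t := by
    have := hzero t ht
    rw [hfdef] at this
    simp only [hX₁eq t ht.1, hX₂eq t ht.1] at this
    have := abs_eq_zero.mp this
    linarith
  refine ⟨?_, hx⟩
  have e1 := hkx₁ t ht.1
  have e2 := hkx₂ t ht.1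
  rw [hη t ht, hx] at e1
  linarith
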